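/- Let d ≥ 8 be an even integer and let B be a bubble gadget that is properly attached to S in a finite simple graph G. Then no two distinct vertices of B are d-twins in the subgraph of G induced by V(B) ∪ S. -/

import Mathlib

open scoped symmDiff

/-- `sdAt G u v` is the number of vertices outside `{u, v}` adjacent to exactly one of `u, v`. -/
noncomputable def sdAt {V : Type*} (G : SimpleGraph V) (u v : V) : ℕ :=
  ((G.neighborSet u \ {v}) ∆ (G.neighborSet v \ {u})).ncard

/-- Vertices of the bubble gadget: the `w × w` grid (first coordinate the column, second the
row, both zero-indexed) minus the two rightmost cells `(w-2, w-1)`, `(w-1, w-1)` of the top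
row (row `w - 1`). -/
abbrev BubbleVert (w : ℕ) : Type :=
  {p : Fin w × Fin w // ¬ (((p.2 : ℕ) = w - 1) ∧ w - 2 ≤ (p.1 : ℕ))}

/-- The bubble gadget graph: rook adjacency, distinct cells adjacent iff they share a column
or a row. -/
def bubbleGraph (w : ℕ) : SimpleGraph (BubbleVert w) where
  Adj p q := p ≠ q ∧ (p.1.1 = q.1.1 ∨ p.1.2 = q.1.2)
  symm := ⟨by rintro p q ⟨h1, h2⟩; exact ⟨h1.symm, h2.imp Eq.symm Eq.symm⟩⟩
  loopless := ⟨fun p h => h.1 rfl⟩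

def exOne (w : ℕ) (x y : BubbleVert w) : Set (BubbleVert w) :=
  {z | z ≠ x ∧ z ≠ y ∧ Xor' ((bubbleGraph w).Adj x z) ((bubbleGraph w).Adj y z)}

def isBd (w : ℕ) (z : BubbleVert w) : Prop := (z.1.2 : ℕ) = w - 1 ∨ (z.1.1 : ℕ) = w - 1

lemma ncard_ge_of_finset {w n : ℕ} (A : Set (BubbleVert w))
    (T : Finset (Fin w × Fin w)) (hT : ∀ p ∈ T, p ∈ Subtype.val '' A)
    (hn : n ≤ T.card) : n ≤ A.ncard := by
  calc n ≤ T.card := hn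
    _ = (T : Set (Fin w × Fin w)).ncard := (Set.ncard_coe_finset T).symm
    _ ≤ (Subtype.val '' A).ncard := Set.ncard_le_ncard hT (Set.toFinite _)
    _ = A.ncard := Set.ncard_image_of_injective A Subtype.val_injective

lemma badcard {w : ℕ} (hw : 2 ≤ w) (base : Finset (Fin w × Fin w)) :
    base.card - 2 ≤ (base.filter (fun p => ¬(((p.2:ℕ) = w-1) ∧ w-2 ≤ (p.1:ℕ)))).card := by
  have h := Finset.card_filter_add_card_filter_not
    (s := base) (p := fun p => ¬(((p.2:ℕ) = w-1) ∧ w-2 ≤ (p.1:ℕ)))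
  have hb : (base.filter (fun p => ¬¬(((p.2:ℕ) = w-1) ∧ w-2 ≤ (p.1:ℕ)))).card ≤ 2 := by
    have hsub : base.filter (fun p => ¬¬(((p.2:ℕ) = w-1) ∧ w-2 ≤ (p.1:ℕ))) ⊆
        {(⟨w-2, by omega⟩, ⟨w-1, by omega⟩), (⟨w-1, by omega⟩, ⟨w-1, by omega⟩)} := by
      intro p hp
      simp only [Finset.mem_filter, not_not] at hp
      obtain ⟨-, h2, h1⟩ := hp
      have hlt := p.1.isLt
      have : (p.1 : ℕ) = w - 2 ∨ (p.1 : ℕ) = w - 1 := by omega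
      simp only [Finset.mem_insert, Finset.mem_singleton, Prod.ext_iff, Fin.ext_iff]
      rcases this with h | h
      · exact Or.inl ⟨h, h2⟩
      · exact Or.inr ⟨h, h2⟩
    calc _ ≤ _ := Finset.card_le_card hsub
      _ ≤ 2 := by apply le_trans (Finset.card_insert_le _ _); simp
  omega

lemma mem_exOne_of {w : ℕ} (x y : BubbleVert w) (p : Fin w × Fin w)
    (hp : ¬(((p.2 : ℕ) = w - 1) ∧ w - 2 ≤ (p.1 : ℕ)))
    (h : ((x.1.1 = p.1 ∨ x.1.2 = p.2) ∧ p ≠ x.1 ∧ ¬(y.1.1 = p.1 ∨ y.1.2 = p.2))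
       ∨ ((y.1.1 = p.1 ∨ y.1.2 = p.2) ∧ p ≠ y.1 ∧ ¬(x.1.1 = p.1 ∨ x.1.2 = p.2))) :
    p ∈ Subtype.val '' exOne w x y := by
  have hne : ∀ (u : BubbleVert w), ¬(u.1.1 = p.1 ∨ u.1.2 = p.2) →
      ((⟨p, hp⟩ : BubbleVert w) ≠ u) := by
    intro u hu he
    cases he
    exact hu (Or.inl rfl)
  refine ⟨⟨p, hp⟩, ?_, rfl⟩
  rcases h with ⟨hline, hnex, hnoy⟩ | ⟨hline, hney, hnox⟩
  · refine ⟨fun he => hnex (congrArg Subtype.val he), hne y hnoy,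
      Or.inl ⟨⟨fun he => hnex (congrArg Subtype.val he.symm), hline⟩, fun ha => hnoy ha.2⟩⟩
  · refine ⟨hne x hnox, fun he => hney (congrArg Subtype.val he),
      Or.inr ⟨⟨fun he => hney (congrArg Subtype.val he.symm), hline⟩, fun ha => hnox ha.2⟩⟩

lemma core {w : ℕ} (hw : 6 ≤ w) (x y : BubbleVert w) (hxy : x ≠ y) :
    2*w - 3 ≤ (exOne w x y).ncard ∨
    (2*w - 4 ≤ (exOne w x y).ncard ∧
      ((isBd w x ∧ ¬ isBd w y) ∨ (isBd w y ∧ ¬ isBd w x))) := by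
  obtain ⟨⟨a, b⟩, hx⟩ := x
  obtain ⟨⟨c, e⟩, hy⟩ := y
  have hxy' : ¬(a = c ∧ b = e) := by
    rintro ⟨rfl, rfl⟩; exact hxy rfl
  have hx' : ¬(((b : ℕ) = w - 1) ∧ w - 2 ≤ (a : ℕ)) := hx
  have hy' : ¬(((e : ℕ) = w - 1) ∧ w - 2 ≤ (c : ℕ)) := hy
  set A := exOne w ⟨(a, b), hx⟩ ⟨(c, e), hy⟩ with hA
  by_cases hac : a = c
  · -- same column
    subst hac
    have hbe : b ≠ e := fun h => hxy' ⟨rfl, h⟩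
    have hbe' : (b : ℕ) ≠ (e : ℕ) := fun h => hbe (Fin.ext h)
    set base : Finset (Fin w × Fin w) := {a}ᶜ ×ˢ ({b, e} : Finset (Fin w)) with hbase
    have hbc : base.card = (w - 1) * 2 := by
      rw [hbase, Finset.card_product, Finset.card_compl, Finset.card_singleton,
        Fintype.card_fin, Finset.card_insert_of_notMem (by simpa using hbe),
        Finset.card_singleton]
    have hsub : ∀ p ∈ base.filter (fun p => ¬(((p.2:ℕ) = w-1) ∧ w-2 ≤ (p.1:ℕ))),
        p ∈ Subtype.val '' A := by
      intro p hp
      simp only [hbase, Finset.mem_filter, Finset.mem_product, Finset.mem_compl,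
        Finset.mem_insert, Finset.mem_singleton] at hp
      obtain ⟨⟨hpa, hpr⟩, hok⟩ := hp
      apply mem_exOne_of _ _ p hok
      rcases hpr with h | h
      · refine Or.inl ⟨Or.inr h.symm, fun he => hpa (congrArg Prod.fst he), ?_⟩
        rintro (hl | hl)
        · exact hpa hl.symm
        · exact hbe (hl.trans h).symm
      · refine Or.inr ⟨Or.inr h.symm, fun he => hpa (congrArg Prod.fst he), ?_⟩
        rintro (hl | hl)
        · exact hpa hl.symm
        · exact hbe (hl.trans h)
    by_cases hrow : (b : ℕ) = w - 1 ∨ (e : ℕ) = w - 1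
    · right
      constructor
      · refine ncard_ge_of_finset A _ hsub ?_
        have := badcard (by omega) base
        omega
      · rcases hrow with hb | he'
        · refine Or.inl ⟨Or.inl hb, ?_⟩
          rintro (h | h)
          · exact hbe' (hb.trans (show (e : ℕ) = w - 1 from h).symm)
          · have h2 : (a : ℕ) = w - 1 := h
            exact hx' ⟨hb, by omega⟩
        · refine Or.inr ⟨Or.inl he', ?_⟩
          rintro (h | h)
          · exact hbe' ((show (b : ℕ) = w - 1 from h).trans he'.symm)
          · have h2 : (a : ℕ) = w - 1 := h
            exact hy' ⟨he', by omega⟩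
    · left
      push_neg at hrow
      have hfe : base.filter (fun p => ¬(((p.2:ℕ) = w-1) ∧ w-2 ≤ (p.1:ℕ))) = base := by
        apply Finset.filter_true_of_mem
        intro p hp
        simp only [hbase, Finset.mem_product, Finset.mem_insert, Finset.mem_singleton] at hp
        rintro ⟨h1, -⟩
        rcases hp.2 with h | h <;> rw [h] at h1
        · exact hrow.1 h1
        · exact hrow.2 h1
      refine ncard_ge_of_finset A _ hsub ?_
      rw [hfe, hbc]; omega
  · by_cases hbe : b = e
    · -- same row
      subst hbe
      have hac' : (a : ℕ) ≠ (c : ℕ) := fun h => hac (Fin.ext h)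
      set base : Finset (Fin w × Fin w) := ({a, c} : Finset (Fin w)) ×ˢ {b}ᶜ with hbase
      have hbc : base.card = 2 * (w - 1) := by
        rw [hbase, Finset.card_product, Finset.card_compl, Finset.card_singleton,
          Fintype.card_fin, Finset.card_insert_of_notMem (by simpa using hac),
          Finset.card_singleton]
      have hsub : ∀ p ∈ base.filter (fun p => ¬(((p.2:ℕ) = w-1) ∧ w-2 ≤ (p.1:ℕ))),
          p ∈ Subtype.val '' A := by
        intro p hp
        simp only [hbase, Finset.mem_filter, Finset.mem_product, Finset.mem_compl,
          Finset.mem_insert, Finset.mem_singleton] at hp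
        obtain ⟨⟨hpc, hpb⟩, hok⟩ := hp
        apply mem_exOne_of _ _ p hok
        rcases hpc with h | h
        · refine Or.inl ⟨Or.inl h.symm, fun he => hpb (congrArg Prod.snd he), ?_⟩
          rintro (hl | hl)
          · exact hac (hl.trans h).symm
          · exact hpb hl.symm
        · refine Or.inr ⟨Or.inl h.symm, fun he => hpb (congrArg Prod.snd he), ?_⟩
          rintro (hl | hl)
          · exact hac (hl.trans h)
          · exact hpb hl.symm
      by_cases ha2 : (a : ℕ) < w - 2
      · by_cases hc2 : (c : ℕ) < w - 2
        · left
          have hfe : base.filter (fun p => ¬(((p.2:ℕ) = w-1) ∧ w-2 ≤ (p.1:ℕ))) = base := by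
            apply Finset.filter_true_of_mem
            intro p hp
            simp only [hbase, Finset.mem_product, Finset.mem_insert,
              Finset.mem_singleton] at hp
            rintro ⟨-, h2⟩
            rcases hp.1 with h | h <;> rw [h] at h2 <;> omega
          refine ncard_ge_of_finset A _ hsub ?_
          rw [hfe, hbc]; omega
        · left
          -- c ≥ w-2, a < w-2 : at most one bad cell
          refine ncard_ge_of_finset A _ hsub ?_
          have h := Finset.card_filter_add_card_filter_not
            (s := base) (p := fun p => ¬(((p.2:ℕ) = w-1) ∧ w-2 ≤ (p.1:ℕ)))
          have hb1 : (base.filter (fun p => ¬¬(((p.2:ℕ) = w-1) ∧ w-2 ≤ (p.1:ℕ)))).card ≤ 1 := by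
            rw [Finset.card_le_one]
            intro p hp q hq
            simp only [hbase, Finset.mem_filter, Finset.mem_product, Finset.mem_insert,
              Finset.mem_singleton, not_not] at hp hq
            obtain ⟨⟨hp1, -⟩, hp2, hp3⟩ := hp
            obtain ⟨⟨hq1, -⟩, hq2, hq3⟩ := hq
            have hp1' : p.1 = c := by
              rcases hp1 with h | h
              · rw [h] at hp3; omega
              · exact h
            have hq1' : q.1 = c := by
              rcases hq1 with h | h
              · rw [h] at hq3; omega
              · exact h
            exact Prod.ext (hp1'.trans hq1'.symm) (Fin.ext (hp2.trans hq2.symm))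
          omega
      · by_cases hc2 : (c : ℕ) < w - 2
        · left
          refine ncard_ge_of_finset A _ hsub ?_
          have h := Finset.card_filter_add_card_filter_not
            (s := base) (p := fun p => ¬(((p.2:ℕ) = w-1) ∧ w-2 ≤ (p.1:ℕ)))
          have hb1 : (base.filter (fun p => ¬¬(((p.2:ℕ) = w-1) ∧ w-2 ≤ (p.1:ℕ)))).card ≤ 1 := by
            rw [Finset.card_le_one]
            intro p hp q hq
            simp only [hbase, Finset.mem_filter, Finset.mem_product, Finset.mem_insert,
              Finset.mem_singleton, not_not] at hp hq
            obtain ⟨⟨hp1, -⟩, hp2, hp3⟩ := hp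
            obtain ⟨⟨hq1, -⟩, hq2, hq3⟩ := hq
            have hp1' : p.1 = a := by
              rcases hp1 with h | h
              · exact h
              · rw [h] at hp3; omega
            have hq1' : q.1 = a := by
              rcases hq1 with h | h
              · exact h
              · rw [h] at hq3; omega
            exact Prod.ext (hp1'.trans hq1'.symm) (Fin.ext (hp2.trans hq2.symm))
          omega
        · -- both columns ≥ w-2
          right
          have hrow : (b : ℕ) ≠ w - 1 := by
            intro hb1
            exact hx' ⟨hb1, by omega⟩
          constructor
          · refine ncard_ge_of_finset A _ hsub ?_
            have := badcard (by omega) base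
            omega
          · have hav := a.isLt
            have hcv := c.isLt
            rcases (by omega : (a : ℕ) = w - 1 ∨ (c : ℕ) = w - 1) with h | h
            · refine Or.inl ⟨Or.inr h, ?_⟩
              rintro (h' | h')
              · exact hrow h'
              · have h2 : (c : ℕ) = w - 1 := h'
                exact hac' (by omega)
            · refine Or.inr ⟨Or.inr h, ?_⟩
              rintro (h' | h')
              · exact hrow h'
              · have h2 : (a : ℕ) = w - 1 := h'
                exact hac' (by omega)
    · -- general position
      left
      set base : Finset (Fin w × Fin w) :=
        (({a, c} : Finset (Fin w)) ×ˢ ({b, e} : Finset (Fin w))ᶜ) ∪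
        (({a, c} : Finset (Fin w))ᶜ ×ˢ ({b, e} : Finset (Fin w))) with hbase
      have hdisj : Disjoint (({a, c} : Finset (Fin w)) ×ˢ ({b, e} : Finset (Fin w))ᶜ)
          ((({a, c} : Finset (Fin w))ᶜ ×ˢ ({b, e} : Finset (Fin w)))) := by
        rw [Finset.disjoint_left]
        intro p hp hq
        simp only [Finset.mem_product, Finset.mem_compl] at hp hq
        exact hq.1 hp.1
      have hbc : base.card = 2 * (w - 2) + (w - 2) * 2 := by
        rw [hbase, Finset.card_union_of_disjoint hdisj, Finset.card_product,
          Finset.card_product, Finset.card_compl, Finset.card_compl, Fintype.card_fin,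
          Finset.card_insert_of_notMem (by simpa using hac),
          Finset.card_insert_of_notMem (by simpa using hbe),
          Finset.card_singleton, Finset.card_singleton]
      have hsub : ∀ p ∈ base.filter (fun p => ¬(((p.2:ℕ) = w-1) ∧ w-2 ≤ (p.1:ℕ))),
          p ∈ Subtype.val '' A := by
        intro p hp
        simp only [hbase, Finset.mem_filter, Finset.mem_union, Finset.mem_product,
          Finset.mem_compl, Finset.mem_insert, Finset.mem_singleton, not_or] at hp
        obtain ⟨hmem, hok⟩ := hp
        apply mem_exOne_of _ _ p hok
        rcases hmem with ⟨hcol, hrow1, hrow2⟩ | ⟨⟨hcol1, hcol2⟩, hrow⟩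
        · rcases hcol with h | h
          · refine Or.inl ⟨Or.inl h.symm, fun he => hrow1 (congrArg Prod.snd he), ?_⟩
            rintro (hl | hl)
            · exact hac (hl.trans h).symm
            · exact hrow2 hl.symm
          · refine Or.inr ⟨Or.inl h.symm, fun he => hrow2 (congrArg Prod.snd he), ?_⟩
            rintro (hl | hl)
            · exact hac (hl.trans h)
            · exact hrow1 hl.symm
        · rcases hrow with h | h
          · refine Or.inl ⟨Or.inr h.symm, fun he => hcol1 (congrArg Prod.fst he), ?_⟩
            rintro (hl | hl)
            · exact hcol2 hl.symm
            · exact hbe (hl.trans h).symm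
          · refine Or.inr ⟨Or.inr h.symm, fun he => hcol2 (congrArg Prod.fst he), ?_⟩
            rintro (hl | hl)
            · exact hcol1 hl.symm
            · exact hbe (hl.trans h)
      refine ncard_ge_of_finset A _ hsub ?_
      have := badcard (by omega : 2 ≤ w) base
      omega

lemma sdAt_comm {V : Type*} (G : SimpleGraph V) (u v : V) : sdAt G u v = sdAt G v u := by
  unfold sdAt; rw [symmDiff_comm]

lemma exOne_comm (w : ℕ) (x y : BubbleVert w) : exOne w x y = exOne w y x := by
  ext z
  constructor <;> rintro ⟨h1, h2, h3⟩ <;> exact ⟨h2, h1, (xor_comm _ _).mp h3⟩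

lemma main_aux {V : Type*} [Fintype V] (d : ℕ) (hd8 : 8 ≤ d)
    (G : SimpleGraph V) (f : BubbleVert (d / 2 + 2) → V)
    (hinj : Function.Injective f)
    (hemb : ∀ x y : BubbleVert (d / 2 + 2),
      G.Adj (f x) (f y) ↔ (bubbleGraph (d / 2 + 2)).Adj x y)
    (S : Set V) (hS : S = {v | v ∉ Set.range f ∧ ∃ x, G.Adj v (f x)})
    (hattach1 : ∀ x : BubbleVert (d / 2 + 2),
      ((x.1.2 : ℕ) = d / 2 + 1 ∨ (x.1.1 : ℕ) = d / 2 + 1) →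
      1 ≤ (G.neighborSet (f x) \ Set.range f).ncard ∧
        (G.neighborSet (f x) \ Set.range f).ncard ≤ 2)
    (hattach2 : ∀ x : BubbleVert (d / 2 + 2),
      ¬ ((x.1.2 : ℕ) = d / 2 + 1 ∨ (x.1.1 : ℕ) = d / 2 + 1) →
      G.neighborSet (f x) \ Set.range f = ∅)
    (x y : BubbleVert (d / 2 + 2))
    (hcase : d + 1 ≤ (exOne (d / 2 + 2) x y).ncard ∨
      (d ≤ (exOne (d / 2 + 2) x y).ncard ∧ isBd (d / 2 + 2) x ∧ ¬ isBd (d / 2 + 2) y)) :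
    ¬ sdAt (G.induce (Set.range f ∪ S))
        ⟨f x, Or.inl ⟨x, rfl⟩⟩ ⟨f y, Or.inl ⟨y, rfl⟩⟩ ≤ d := by
  classical
  set H := G.induce (Set.range f ∪ S) with hH
  set u : ↥(Set.range f ∪ S) := ⟨f x, Or.inl ⟨x, rfl⟩⟩ with hu
  set v : ↥(Set.range f ∪ S) := ⟨f y, Or.inl ⟨y, rfl⟩⟩ with hv
  set D := (H.neighborSet u \ {v}) ∆ (H.neighborSet v \ {u}) with hD
  have hsd : sdAt H u v = D.ncard := rfl
  have hadj : ∀ (p q : ↥(Set.range f ∪ S)), H.Adj p q ↔ G.Adj p.1 q.1 := by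
    intro p q; rfl
  set e : BubbleVert (d / 2 + 2) → ↥(Set.range f ∪ S) :=
    fun z => ⟨f z, Or.inl ⟨z, rfl⟩⟩ with he
  have einj : Function.Injective e := fun z1 z2 h => hinj (congrArg Subtype.val h)
  have himg : e '' exOne (d / 2 + 2) x y ⊆ D := by
    rintro - ⟨z, ⟨hzx, hzy, hxor⟩, rfl⟩
    have hnev : e z ≠ v := fun h => hzy (hinj (congrArg Subtype.val h))
    have hneu : e z ≠ u := fun h => hzx (hinj (congrArg Subtype.val h))
    rw [hD, Set.mem_symmDiff]
    rcases hxor with ⟨hax, hnay⟩ | ⟨hay, hnax⟩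
    · refine Or.inl ⟨⟨(hadj u (e z)).mpr ((hemb x z).mpr hax), hnev⟩, ?_⟩
      rintro ⟨h2, -⟩
      exact hnay ((hemb y z).mp ((hadj v (e z)).mp h2))
    · refine Or.inr ⟨⟨(hadj v (e z)).mpr ((hemb y z).mpr hay), hneu⟩, ?_⟩
      rintro ⟨h2, -⟩
      exact hnax ((hemb x z).mp ((hadj u (e z)).mp h2))
  have himgcard : (exOne (d / 2 + 2) x y).ncard = (e '' exOne (d / 2 + 2) x y).ncard :=
    (Set.ncard_image_of_injective _ einj).symm
  rcases hcase with hge | ⟨hge, hbdx, hbdy⟩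
  · have : d + 1 ≤ D.ncard := by
      calc d + 1 ≤ (exOne (d / 2 + 2) x y).ncard := hge
        _ = (e '' exOne (d / 2 + 2) x y).ncard := himgcard
        _ ≤ D.ncard := Set.ncard_le_ncard himg (Set.toFinite _)
    rw [hsd]; omega
  · have hcond : ((x.1.2 : ℕ) = d / 2 + 1 ∨ (x.1.1 : ℕ) = d / 2 + 1) := by
      rcases hbdx with h | h
      · exact Or.inl (by omega)
      · exact Or.inr (by omega)
    have hcond2 : ¬ ((y.1.2 : ℕ) = d / 2 + 1 ∨ (y.1.1 : ℕ) = d / 2 + 1) := by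
      intro h
      apply hbdy
      rcases h with h | h
      · exact Or.inl (by omega)
      · exact Or.inr (by omega)
    obtain ⟨h1, -⟩ := hattach1 x hcond
    have hne2 : (G.neighborSet (f x) \ Set.range f).Nonempty :=
      (Set.ncard_pos (Set.toFinite _)).mp (by omega)
    obtain ⟨s, hs_adj, hs_nr⟩ := hne2
    have hsS : s ∈ S := by rw [hS]; exact ⟨hs_nr, ⟨x, hs_adj.symm⟩⟩
    set s' : ↥(Set.range f ∪ S) := ⟨s, Or.inr hsS⟩ with hs'
    have hnadj : ¬ G.Adj (f y) s := by
      intro h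
      have h2 : s ∈ G.neighborSet (f y) \ Set.range f := ⟨h, hs_nr⟩
      rw [hattach2 y hcond2] at h2
      exact h2
    have hs'D : s' ∈ D := by
      rw [hD, Set.mem_symmDiff]
      refine Or.inl ⟨⟨(hadj u s').mpr hs_adj, fun h => hs_nr ⟨y, (congrArg Subtype.val h).symm⟩⟩, ?_⟩
      rintro ⟨h2, -⟩
      exact hnadj ((hadj v s').mp h2)
    have hs'ni : s' ∉ e '' exOne (d / 2 + 2) x y := by
      rintro ⟨z, -, hz⟩
      exact hs_nr ⟨z, congrArg Subtype.val hz⟩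
    have hins : insert s' (e '' exOne (d / 2 + 2) x y) ⊆ D := by
      rw [Set.insert_subset_iff]; exact ⟨hs'D, himg⟩
    have : d + 1 ≤ D.ncard := by
      calc d + 1 ≤ (exOne (d / 2 + 2) x y).ncard + 1 := by omega
        _ = (e '' exOne (d / 2 + 2) x y).ncard + 1 := by rw [himgcard]
        _ = (insert s' (e '' exOne (d / 2 + 2) x y)).ncard :=
            (Set.ncard_insert_of_notMem hs'ni (Set.toFinite _)).symm
        _ ≤ D.ncard := Set.ncard_le_ncard hins (Set.toFinite _)
    rw [hsd]; omega

/-- If the bubble gadget `B` (embedded in `G` via `f` as an induced subgraph) is properly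
attached to `S` in `G`, then no two distinct vertices of `B` are `d`-twins in the subgraph of
`G` induced by `V(B) ∪ S`. -/
theorem bubble_no_d_twins {V : Type*} [Fintype V] (d : ℕ) (hd8 : 8 ≤ d) (hde : Even d)
    (G : SimpleGraph V) (f : BubbleVert (d / 2 + 2) → V)
    (hinj : Function.Injective f)
    (hemb : ∀ x y : BubbleVert (d / 2 + 2),
      G.Adj (f x) (f y) ↔ (bubbleGraph (d / 2 + 2)).Adj x y)
    (S : Set V) (hS : S = {v | v ∉ Set.range f ∧ ∃ x, G.Adj v (f x)})
    (hattach1 : ∀ x : BubbleVert (d / 2 + 2),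
      ((x.1.2 : ℕ) = d / 2 + 1 ∨ (x.1.1 : ℕ) = d / 2 + 1) →
      1 ≤ (G.neighborSet (f x) \ Set.range f).ncard ∧
        (G.neighborSet (f x) \ Set.range f).ncard ≤ 2)
    (hattach2 : ∀ x : BubbleVert (d / 2 + 2),
      ¬ ((x.1.2 : ℕ) = d / 2 + 1 ∨ (x.1.1 : ℕ) = d / 2 + 1) →
      G.neighborSet (f x) \ Set.range f = ∅) :
    ∀ x y : BubbleVert (d / 2 + 2), x ≠ y →
      ¬ sdAt (G.induce (Set.range f ∪ S))
          ⟨f x, Or.inl ⟨x, rfl⟩⟩ ⟨f y, Or.inl ⟨y, rfl⟩⟩ ≤ d := by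
  intro x y hxy
  have hw : 6 ≤ d / 2 + 2 := by omega
  obtain ⟨k, hk⟩ := hde
  rcases core hw x y hxy with h | ⟨h, hbd | hbd⟩
  · exact main_aux d hd8 G f hinj hemb S hS hattach1 hattach2 x y (Or.inl (by omega))
  · exact main_aux d hd8 G f hinj hemb S hS hattach1 hattach2 x y
      (Or.inr ⟨by omega, hbd.1, hbd.2⟩)
  · rw [sdAt_comm]
    refine main_aux d hd8 G f hinj hemb S hS hattach1 hattach2 y x
      (Or.inr ⟨?_, hbd.1, hbd.2⟩)
    rw [exOne_comm (d / 2 + 2) y x]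
    omega
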